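/- arXiv:1109.3305 — 3 statements merged into one kernel-verified Lean document; each statement's English description precedes it below -/
import Mathlib

section
/- Let 1=q<p<∞, λ>0, 0≤a<b≤∞ and I=(a,b), and set p'=p/(p−1). Then K(I) = (∫_I [t^{−λ}−b^{−λ}]^{p'} v^{p'}(t) dt)^{1/p'}. -/
open MeasureTheory Set ENNReal Filter

noncomputable section

/-- The term `e^{-x b^λ}`, interpreted as `0` when `b = ∞`. -/
def bexp (lam : ℝ) (b : ℝ≥0∞) (x : ℝ) : ℝ :=
  if b = ⊤ then 0 else Real.exp (-(x * b.toReal ^ lam))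

/-- The term `b^{-λ}`, interpreted as `0` when `b = ∞`. -/
def binv (lam : ℝ) (b : ℝ≥0∞) : ℝ :=
  if b = ⊤ then 0 else b.toReal ^ (-lam)

/-- The interval `(a, b) ⊆ ℝ`, where `b` may be `∞`. -/
def Iab (a : ℝ) (b : ℝ≥0∞) : Set ℝ := {y : ℝ | a < y ∧ ENNReal.ofReal y < b}

/-- The localized Laplace-type operator `L_{(a,b)}`. -/
def Lab (lam : ℝ) (v : ℝ → ℝ) (a : ℝ) (b : ℝ≥0∞) (f : ℝ → ℝ) (x : ℝ) : ℝ :=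
  ∫ y in Iab a b, f y * v y * (Real.exp (-(x * y ^ lam)) - bexp lam b x)

/-- The Laplace-type transformation `L f (x) = ∫_0^∞ e^{-x y^λ} f(y) v(y) dy`. -/
def Lap (lam : ℝ) (v : ℝ → ℝ) (f : ℝ → ℝ) (x : ℝ) : ℝ :=
  ∫ y in Ioi (0:ℝ), Real.exp (-(x * y ^ lam)) * f y * v y

/-- `K(I) = sup { ‖L_{(a,b)} f‖_{L^q(0,∞)} / ‖f‖_{L^p(a,b)} : 0 ≠ f ∈ L^p(a,b) }`. -/
def Knorm (lam : ℝ) (v : ℝ → ℝ) (p q : ℝ) (a : ℝ) (b : ℝ≥0∞) : ℝ≥0∞ :=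
  ⨆ f : {f : ℝ → ℝ // MemLp f (ENNReal.ofReal p) (volume.restrict (Iab a b)) ∧
      eLpNorm f (ENNReal.ofReal p) (volume.restrict (Iab a b)) ≠ 0},
    eLpNorm (Lab lam v a b f.1) (ENNReal.ofReal q) (volume.restrict (Ioi 0)) /
      eLpNorm f.1 (ENNReal.ofReal p) (volume.restrict (Iab a b))

/-- The (quasi-)norm of an operator `T : L^p(0,∞) → L^q(0,∞)`. -/
def opNorm (p q : ℝ) (T : (ℝ → ℝ) → ℝ → ℝ) : ℝ≥0∞ :=
  ⨆ f : {f : ℝ → ℝ // MemLp f (ENNReal.ofReal p) (volume.restrict (Ioi 0)) ∧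
      eLpNorm f (ENNReal.ofReal p) (volume.restrict (Ioi 0)) ≠ 0},
    eLpNorm (T f.1) (ENNReal.ofReal q) (volume.restrict (Ioi 0)) /
      eLpNorm f.1 (ENNReal.ofReal p) (volume.restrict (Ioi 0))

/-- The `n`-th approximation number of `T : L^p(0,∞) → L^q(0,∞)`:
the infimum of `‖T - K‖` over bounded linear `K` of rank `< n`. -/
def approxNum (n : ℕ) (p q : ℝ) (T : (ℝ → ℝ) → ℝ → ℝ) : ℝ≥0∞ :=
  ⨅ K : {K : (ℝ → ℝ) →ₗ[ℝ] (ℝ → ℝ) //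
      Module.rank ℝ ↥(LinearMap.range K) < (n : Cardinal) ∧
      opNorm p q (fun f => K f) < ⊤},
    opNorm p q (fun f x => T f x - K.1 f x)

/-- Compactness of the Laplace-type transformation `L : L^p(0,∞) → L^q(0,∞)`,
expressed as total boundedness of the image of the unit ball. -/
def LapCompact (lam : ℝ) (v : ℝ → ℝ) (p q : ℝ) : Prop :=
  ∀ ε : ℝ≥0∞, 0 < ε → ∃ S : Finset (ℝ → ℝ), ∀ f : ℝ → ℝ,
    MemLp f (ENNReal.ofReal p) (volume.restrict (Ioi 0)) →
    eLpNorm f (ENNReal.ofReal p) (volume.restrict (Ioi 0)) ≤ 1 →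
    ∃ g ∈ S, eLpNorm (fun x => Lap lam v f x - g x) (ENNReal.ofReal q)
      (volume.restrict (Ioi 0)) ≤ ε

/-- The dyadic interval `Δ_k = [2^{k-1}, 2^k]`. -/
def dyad (k : ℤ) : Set ℝ := Icc ((2:ℝ) ^ (k-1)) ((2:ℝ) ^ k)

/-- `σ_k(δ)`. -/
def sigmaK (lam p' q δ : ℝ) (v : ℝ → ℝ) (k : ℤ) : ℝ≥0∞ :=
  (∫⁻ x in Ioi (0:ℝ), ENNReal.ofReal
      (Real.exp (-(x * (2:ℝ) ^ ((k:ℝ) * lam))) -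
        Real.exp (-(x * (2:ℝ) ^ (((k:ℝ) + 1) * lam)))) ^ δ) ^ (1/q) *
  (∫⁻ y in dyad k, ENNReal.ofReal (v y) ^ p') ^ (1/p')

/-- `Λ_s(δ) = (Σ_{k∈ℤ} σ_k(δ)^s)^{1/s}`. -/
def LamS (lam p' q δ s : ℝ) (v : ℝ → ℝ) : ℝ≥0∞ :=
  (∑' k : ℤ, sigmaK lam p' q δ v k ^ s) ^ (1/s)

/-- `J_s`. -/
def Js (lam p' q s : ℝ) (v : ℝ → ℝ) : ℝ≥0∞ :=
  (∫⁻ t in Ioi (0:ℝ), ENNReal.ofReal t ^ (-(lam * s / q)) *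
    (∫⁻ y in Ioo 0 t, ENNReal.ofReal (v y) ^ p') ^ (s/p' - 1) *
    ENNReal.ofReal (v t) ^ p') ^ (1/s)

/-- `esssup_{a<y<t} v(y)` (with values in `ℝ≥0∞`). -/
def vsup (v : ℝ → ℝ) (a t : ℝ) : ℝ≥0∞ :=
  essSup (fun y => ENNReal.ofReal (v y)) (volume.restrict (Ioo a t))

/-- `J̄_u = (∫_0^∞ (esssup_{0<y<t} v(y))^u t^{-λu/q-1} dt)^{1/u}`. -/
def JsBar (lam q u : ℝ) (v : ℝ → ℝ) : ℝ≥0∞ :=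
  (∫⁻ t in Ioi (0:ℝ), vsup v 0 t ^ u * ENNReal.ofReal t ^ (-(lam * u / q) - 1)) ^ (1/u)

/-- `v_ε(t) = lim_{ε→0⁺} ‖v‖_{L^∞(t-ε,t+ε)}` (the limit of the non-increasing family
being its infimum). -/
def vEps (v : ℝ → ℝ) (t : ℝ) : ℝ≥0∞ :=
  ⨅ (e : ℝ) (_ : 0 < e),
    essSup (fun y => ENNReal.ofReal (v y)) (volume.restrict (Ioo (t - e) (t + e)))


namespace Stmt4Aux

lemma integral_exp_neg_mul_Ioi' {c : ℝ} (hc : 0 < c) :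
    ∫ x in Ioi (0:ℝ), Real.exp (-(x * c)) = 1 / c := by
  have h := integral_comp_mul_left_Ioi (fun x => Real.exp (-x)) 0 hc
  simp only [mul_zero, integral_exp_neg_Ioi, neg_zero, Real.exp_zero, smul_eq_mul, mul_one] at h
  calc ∫ x in Ioi (0:ℝ), Real.exp (-(x * c))
      = ∫ x in Ioi (0:ℝ), Real.exp (-(c * x)) := by simp_rw [mul_comm]
    _ = c⁻¹ := h
    _ = 1 / c := (one_div c).symm

lemma integrableOn_exp_neg_mul' {c : ℝ} (hc : 0 < c) :
    IntegrableOn (fun x => Real.exp (-(x * c))) (Ioi (0:ℝ)) := by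
  have h := exp_neg_integrableOn_Ioi 0 hc
  have : (fun x : ℝ => Real.exp (-(x * c))) = fun x => Real.exp (-c * x) := by
    ext x; congr 1; ring
  rwa [this]

lemma measurableSet_Iab (a : ℝ) (b : ℝ≥0∞) : MeasurableSet (Iab a b) := by
  have : Iab a b = Ioi a ∩ ENNReal.ofReal ⁻¹' (Iio b) := by
    ext y; simp [Iab]
  rw [this]
  exact measurableSet_Ioi.inter (ENNReal.measurable_ofReal measurableSet_Iio)

lemma Iab_subset_Ioi {a : ℝ} {b : ℝ≥0∞} (ha : 0 ≤ a) : Iab a b ⊆ Ioi 0 :=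
  fun _ hy => lt_of_le_of_lt ha hy.1

lemma lt_toReal_of_mem {a y : ℝ} {b : ℝ≥0∞} (hb : b ≠ ⊤) (hy0 : 0 < y)
    (hy : y ∈ Iab a b) : y < b.toReal :=
  (ENNReal.ofReal_lt_iff_lt_toReal hy0.le hb).mp hy.2

lemma w_nonneg {lam a : ℝ} {b : ℝ≥0∞} (hlam : 0 < lam) (ha : 0 ≤ a)
    {y : ℝ} (hy : y ∈ Iab a b) : 0 ≤ y ^ (-lam) - binv lam b := by
  have hy0 : 0 < y := lt_of_le_of_lt ha hy.1
  by_cases hb : b = ⊤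
  · simp only [binv, if_pos hb, sub_zero]
    exact (Real.rpow_pos_of_pos hy0 _).le
  · have hyd : y < b.toReal := lt_toReal_of_mem hb hy0 hy
    have hd0 : 0 < b.toReal := lt_trans hy0 hyd
    simp only [binv, if_neg hb, sub_nonneg]
    rw [Real.rpow_neg hd0.le, Real.rpow_neg hy0.le]
    exact inv_anti₀ (Real.rpow_pos_of_pos hy0 _)
      (Real.rpow_le_rpow hy0.le hyd.le hlam.le)

lemma kernel_nonneg {lam a : ℝ} {b : ℝ≥0∞} (hlam : 0 < lam) (ha : 0 ≤ a)
    {x y : ℝ} (hx : 0 ≤ x) (hy : y ∈ Iab a b) :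
    0 ≤ Real.exp (-(x * y ^ lam)) - bexp lam b x := by
  have hy0 : 0 < y := lt_of_le_of_lt ha hy.1
  by_cases hb : b = ⊤
  · simp only [bexp, if_pos hb, sub_zero]
    exact (Real.exp_pos _).le
  · have hyd : y < b.toReal := lt_toReal_of_mem hb hy0 hy
    simp only [bexp, if_neg hb, sub_nonneg]
    apply Real.exp_le_exp.2
    apply neg_le_neg
    exact mul_le_mul_of_nonneg_left (Real.rpow_le_rpow hy0.le hyd.le hlam.le) hx

lemma kernel_le_one {lam : ℝ} {b : ℝ≥0∞} {x y : ℝ} (hx : 0 ≤ x) (hy : 0 < y)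
    (hlam : 0 < lam) :
    Real.exp (-(x * y ^ lam)) - bexp lam b x ≤ 1 := by
  have h1 : Real.exp (-(x * y ^ lam)) ≤ 1 := by
    rw [Real.exp_le_one_iff, neg_nonpos]
    exact mul_nonneg hx (Real.rpow_pos_of_pos hy _).le
  have h2 : 0 ≤ bexp lam b x := by
    unfold bexp; split_ifs
    · exact le_rfl
    · exact (Real.exp_pos _).le
  linarith

lemma kernel_lintegral {lam a : ℝ} {b : ℝ≥0∞} (hlam : 0 < lam) (ha : 0 ≤ a)
    {y : ℝ} (hy : y ∈ Iab a b) :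
    ∫⁻ x in Ioi (0:ℝ), ENNReal.ofReal (Real.exp (-(x * y ^ lam)) - bexp lam b x)
      = ENNReal.ofReal (y ^ (-lam) - binv lam b) := by
  have hy0 : 0 < y := lt_of_le_of_lt ha hy.1
  have hc : 0 < y ^ lam := Real.rpow_pos_of_pos hy0 lam
  by_cases hb : b = ⊤
  · simp only [bexp, binv, if_pos hb, sub_zero]
    rw [← ofReal_integral_eq_lintegral_ofReal (integrableOn_exp_neg_mul' hc)
      (Filter.Eventually.of_forall fun x => (Real.exp_pos _).le)]
    rw [integral_exp_neg_mul_Ioi' hc, Real.rpow_neg hy0.le, one_div]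
  · have hyd : y < b.toReal := lt_toReal_of_mem hb hy0 hy
    have hd0 : 0 < b.toReal := lt_trans hy0 hyd
    have hd : 0 < b.toReal ^ lam := Real.rpow_pos_of_pos hd0 lam
    simp only [bexp, binv, if_neg hb]
    have hint : IntegrableOn
        (fun x => Real.exp (-(x * y ^ lam)) - Real.exp (-(x * b.toReal ^ lam)))
        (Ioi (0:ℝ)) :=
      (integrableOn_exp_neg_mul' hc).sub (integrableOn_exp_neg_mul' hd)
    rw [← ofReal_integral_eq_lintegral_ofReal hint ?_]
    · congr 1
      rw [integral_sub (integrableOn_exp_neg_mul' hc) (integrableOn_exp_neg_mul' hd),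
        integral_exp_neg_mul_Ioi' hc, integral_exp_neg_mul_Ioi' hd,
        Real.rpow_neg hy0.le, Real.rpow_neg hd0.le, one_div, one_div]
    · filter_upwards [self_mem_ae_restrict (measurableSet_Ioi : MeasurableSet (Ioi (0:ℝ)))]
        with x hx
      have h1 : y ^ lam ≤ b.toReal ^ lam := Real.rpow_le_rpow hy0.le hyd.le hlam.le
      have h2 : x * y ^ lam ≤ x * b.toReal ^ lam :=
        mul_le_mul_of_nonneg_left h1 (le_of_lt hx)
      exact sub_nonneg.2 (Real.exp_le_exp.2 (neg_le_neg h2))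

lemma measurable_bexp (lam : ℝ) (b : ℝ≥0∞) : Measurable (bexp lam b) := by
  unfold bexp; split_ifs
  · exact measurable_const
  · fun_prop

lemma master {lam a : ℝ} {b : ℝ≥0∞} (hlam : 0 < lam) (ha : 0 ≤ a)
    {h : ℝ → ℝ} (hh : Measurable h) :
    ∫⁻ x in Ioi (0:ℝ), ∫⁻ y in Iab a b,
        ENNReal.ofReal (h y) *
          ENNReal.ofReal (Real.exp (-(x * y ^ lam)) - bexp lam b x) ∂volume ∂volume
      = ∫⁻ y in Iab a b, ENNReal.ofReal (h y) *
          ENNReal.ofReal (y ^ (-lam) - binv lam b) := by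
  have hker : Measurable fun z : ℝ × ℝ =>
      Real.exp (-(z.1 * z.2 ^ lam)) - bexp lam b z.1 := by
    have h1 : Measurable fun z : ℝ × ℝ => Real.exp (-(z.1 * z.2 ^ lam)) := by fun_prop
    exact h1.sub ((measurable_bexp lam b).comp measurable_fst)
  have hm : AEMeasurable (fun z : ℝ × ℝ =>
      ENNReal.ofReal (h z.2) *
        ENNReal.ofReal (Real.exp (-(z.1 * z.2 ^ lam)) - bexp lam b z.1))
      ((volume.restrict (Ioi (0:ℝ))).prod (volume.restrict (Iab a b))) :=
    (((hh.comp measurable_snd).ennreal_ofReal).mul hker.ennreal_ofReal).aemeasurable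
  rw [lintegral_lintegral_swap hm]
  refine setLIntegral_congr_fun (measurableSet_Iab a b)
    (fun y hy => ?_)
  rw [lintegral_const_mul' _ _ ENNReal.ofReal_ne_top, kernel_lintegral hlam ha hy]

/-- Truncation of `g·w` used to realize the lower bound. -/
def trf (g : ℝ → ℝ) (lam a : ℝ) (b : ℝ≥0∞) (n : ℕ) (y : ℝ) : ℝ :=
  ((Iab a b ∩ Ioo (a + 1/((n:ℝ)+1)) ((n:ℝ)+1)).indicator
    (fun y => min (max (g y * (y ^ (-lam) - binv lam b)) 0) (n:ℝ))) y

lemma trf_nonneg (g : ℝ → ℝ) (lam a : ℝ) (b : ℝ≥0∞) (n : ℕ) (y : ℝ) :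
    0 ≤ trf g lam a b n y := by
  unfold trf
  by_cases h : y ∈ Iab a b ∩ Ioo (a + 1/((n:ℝ)+1)) ((n:ℝ)+1)
  · rw [indicator_of_mem h]
    exact le_min (le_max_right _ _) (Nat.cast_nonneg n)
  · rw [indicator_of_notMem h]

lemma trf_le_n (g : ℝ → ℝ) (lam a : ℝ) (b : ℝ≥0∞) (n : ℕ) (y : ℝ) :
    trf g lam a b n y ≤ (n : ℝ) := by
  unfold trf
  by_cases h : y ∈ Iab a b ∩ Ioo (a + 1/((n:ℝ)+1)) ((n:ℝ)+1)
  · rw [indicator_of_mem h]; exact min_le_right _ _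
  · rw [indicator_of_notMem h]; exact Nat.cast_nonneg n

lemma trf_measurable {g : ℝ → ℝ} (hg : Measurable g) (lam a : ℝ) (b : ℝ≥0∞) (n : ℕ) :
    Measurable (trf g lam a b n) := by
  unfold trf
  refine Measurable.indicator ?_ ((measurableSet_Iab a b).inter measurableSet_Ioo)
  exact ((hg.mul (by measurability)).max measurable_const).min measurable_const

lemma trf_mono (g : ℝ → ℝ) (lam a : ℝ) (b : ℝ≥0∞) {n m : ℕ} (hnm : n ≤ m) (y : ℝ) :
    trf g lam a b n y ≤ trf g lam a b m y := by
  by_cases h : y ∈ Iab a b ∩ Ioo (a + 1/((n:ℝ)+1)) ((n:ℝ)+1)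
  · have hsub : Iab a b ∩ Ioo (a + 1/((n:ℝ)+1)) ((n:ℝ)+1)
        ⊆ Iab a b ∩ Ioo (a + 1/((m:ℝ)+1)) ((m:ℝ)+1) := by
      refine inter_subset_inter_right _ (Ioo_subset_Ioo ?_ ?_)
      · have : 1/((m:ℝ)+1) ≤ 1/((n:ℝ)+1) :=
          one_div_le_one_div_of_le (by positivity) (by exact_mod_cast by omega)
        linarith
      · have : (n:ℝ) ≤ (m:ℝ) := Nat.cast_le.2 hnm
        linarith
    unfold trf
    rw [indicator_of_mem h, indicator_of_mem (hsub h)]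
    exact min_le_min le_rfl (Nat.cast_le.2 hnm)
  · calc trf g lam a b n y = 0 := by unfold trf; rw [indicator_of_notMem h]
      _ ≤ trf g lam a b m y := trf_nonneg g lam a b m y

lemma trf_le {g : ℝ → ℝ} {lam a : ℝ} {b : ℝ≥0∞} {n : ℕ} {y : ℝ} (hg0 : 0 ≤ g y) :
    ENNReal.ofReal (trf g lam a b n y)
      ≤ ENNReal.ofReal (g y) * ENNReal.ofReal (y ^ (-lam) - binv lam b) := by
  unfold trf
  by_cases h : y ∈ Iab a b ∩ Ioo (a + 1/((n:ℝ)+1)) ((n:ℝ)+1)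
  · rw [indicator_of_mem h]
    refine le_trans (ENNReal.ofReal_le_ofReal (min_le_left _ _)) ?_
    rcases le_total (g y * (y ^ (-lam) - binv lam b)) 0 with hle | hle
    · rw [max_eq_right hle]; simp
    · rw [max_eq_left hle, ENNReal.ofReal_mul hg0]
  · rw [indicator_of_notMem h]; simp

lemma trf_attains {g : ℝ → ℝ} {lam a : ℝ} {b : ℝ≥0∞} (hlam : 0 < lam) (ha : 0 ≤ a)
    {y : ℝ} (hy : y ∈ Iab a b) (hg0 : 0 ≤ g y) :
    ∃ m : ℕ, trf g lam a b m y = g y * (y ^ (-lam) - binv lam b) := by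
  have hya : 0 < y - a := sub_pos.2 hy.1
  obtain ⟨m, hm⟩ := exists_nat_ge
    (max (max (1/(y - a)) y) (g y * (y ^ (-lam) - binv lam b)))
  refine ⟨m, ?_⟩
  have h1 : 1/(y-a) ≤ (m:ℝ) := le_trans ((le_max_left _ _).trans (le_max_left _ _)) hm
  have h2 : y ≤ (m:ℝ) := le_trans ((le_max_right _ _).trans (le_max_left _ _)) hm
  have h3 : g y * (y ^ (-lam) - binv lam b) ≤ (m:ℝ) := le_trans (le_max_right _ _) hm
  have hX0 : 0 ≤ g y * (y ^ (-lam) - binv lam b) :=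
    mul_nonneg hg0 (w_nonneg hlam ha hy)
  have hmem : y ∈ Iab a b ∩ Ioo (a + 1/((m:ℝ)+1)) ((m:ℝ)+1) := by
    refine ⟨hy, ?_, by linarith⟩
    have hm1 : 1/(y - a) < (m:ℝ) + 1 := by linarith
    have hkey : 1/((m:ℝ)+1) < y - a := by
      rw [div_lt_iff₀ (by positivity)]
      rw [div_lt_iff₀ hya] at hm1
      nlinarith
    linarith
  unfold trf
  rw [indicator_of_mem hmem, min_eq_left (max_le h3 (Nat.cast_nonneg m)),
    max_eq_left hX0]

end Stmt4Aux

open Stmt4Aux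

/-- Lemma 2, case `1 = q < p < ∞`: `K(I) = B₁ = (∫_I [t^{-λ}-b^{-λ}]^{p'} v^{p'}(t) dt)^{1/p'}`. -/
theorem statement4
    (p lam a : ℝ) (b : ℝ≥0∞) (hp : 1 < p)
    (hlam : 0 < lam) (ha : 0 ≤ a) (hab : ENNReal.ofReal a < b)
    (v : ℝ → ℝ)
    (hv0 : ∀ y ∈ Ioi (0:ℝ), 0 ≤ v y)
    (hvloc : LocallyIntegrableOn v (Ioi 0))
    (p' : ℝ) (hp' : p' = p / (p - 1)) :
    Knorm lam v p 1 a b =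
      (∫⁻ t in Iab a b,
        ENNReal.ofReal (t ^ (-lam) - binv lam b) ^ p' *
          ENNReal.ofReal (v t) ^ p') ^ (1/p') := by
  classical
  -- exponent facts
  have hp0 : 0 < p := lt_trans one_pos hp
  have hpq : p.HolderConjugate p' := by
    rw [hp']; exact Real.HolderConjugate.conjExponent hp
  have hp'1 : 1 < p' := hpq.symm.lt
  have hp'0 : 0 < p' := lt_trans one_pos hp'1
  have hp'm1 : 0 < p' - 1 := by linarith
  have hp'p : (p' - 1) * p = p' := by
    rw [hp']
    have h1 : p - 1 ≠ 0 := by intro h; rw [sub_eq_zero] at h; exact (lt_irrefl _ (h ▸ hp)).elim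
    field_simp
    ring
  -- measurable representative of v
  have hImeas : MeasurableSet (Iab a b) := measurableSet_Iab a b
  have hIsub : Iab a b ⊆ Ioi 0 := Iab_subset_Ioi ha
  obtain ⟨g, hgsm, hvg⟩ := hvloc.aestronglyMeasurable
  have hgm : Measurable g := hgsm.measurable
  have hvgI : v =ᵐ[volume.restrict (Iab a b)] g :=
    ae_mono (Measure.restrict_mono hIsub le_rfl) hvg
  have hg0I : ∀ᵐ y ∂(volume.restrict (Iab a b)), 0 ≤ g y ∧ g y = v y := by
    filter_upwards [hvgI, ae_restrict_mem hImeas] with y h1 h2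
    exact ⟨h1 ▸ hv0 y (hIsub h2), h1.symm⟩
  have hwm : Measurable fun y : ℝ => y ^ (-lam) - binv lam b := by measurability
  -- rewrite the RHS integral using the measurable representative
  have hRHS : (∫⁻ t in Iab a b,
        ENNReal.ofReal (t ^ (-lam) - binv lam b) ^ p' * ENNReal.ofReal (v t) ^ p')
      = ∫⁻ y in Iab a b,
        (ENNReal.ofReal (g y) * ENNReal.ofReal (y ^ (-lam) - binv lam b)) ^ p' := by
    apply lintegral_congr_ae
    filter_upwards [hg0I] with y hy
    rw [ENNReal.mul_rpow_of_nonneg _ _ hp'0.le, hy.2, mul_comm]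
  rw [hRHS]
  -- eLpNorm formula
  have heLp : ∀ f : ℝ → ℝ, eLpNorm f (ENNReal.ofReal p) (volume.restrict (Iab a b))
      = (∫⁻ y in Iab a b, (‖f y‖₊ : ℝ≥0∞) ^ p) ^ (1/p) := by
    intro f
    rw [eLpNorm_eq_lintegral_rpow_enorm_toReal (ENNReal.ofReal_pos.mpr hp0).ne'
      ENNReal.ofReal_ne_top, ENNReal.toReal_ofReal hp0.le]
    simp only [enorm_eq_nnnorm]
  refine le_antisymm ?_ ?_
  · -- upper bound
    simp only [Knorm]
    refine iSup_le ?_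
    rintro ⟨f, hfmem, hfne⟩
    dsimp only
    obtain ⟨f', hf'sm, hff'⟩ := hfmem.1
    have hf'm : Measurable f' := hf'sm.measurable
    have key : eLpNorm (Lab lam v a b f) (ENNReal.ofReal 1) (volume.restrict (Ioi 0))
        ≤ (∫⁻ y in Iab a b,
            (ENNReal.ofReal (g y) * ENNReal.ofReal (y ^ (-lam) - binv lam b)) ^ p') ^ (1/p')
          * eLpNorm f (ENNReal.ofReal p) (volume.restrict (Iab a b)) := by
      rw [ENNReal.ofReal_one, eLpNorm_one_eq_lintegral_enorm]
      have step1 : ∫⁻ x in Ioi (0:ℝ), (‖Lab lam v a b f x‖₊ : ℝ≥0∞)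
          ≤ ∫⁻ x in Ioi (0:ℝ), ∫⁻ y in Iab a b,
              ENNReal.ofReal (|f' y| * g y) *
                ENNReal.ofReal (Real.exp (-(x * y ^ lam)) - bexp lam b x) := by
        refine lintegral_mono_ae ?_
        filter_upwards [ae_restrict_mem measurableSet_Ioi] with x hx
        refine le_trans (enorm_integral_le_lintegral_enorm _) (le_of_eq ?_)
        apply lintegral_congr_ae
        filter_upwards [hg0I, hff', ae_restrict_mem hImeas] with y hgy hfy hyI
        have hker0 : 0 ≤ Real.exp (-(x * y ^ lam)) - bexp lam b x :=
          kernel_nonneg hlam ha (le_of_lt hx) hyI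
        rw [Real.enorm_eq_ofReal_abs, abs_mul,
          ENNReal.ofReal_mul (abs_nonneg _), abs_of_nonneg hker0,
          abs_mul, hfy, ← hgy.2, abs_of_nonneg hgy.1]
      have step2 := master (b := b) (h := fun y => |f' y| * g y) hlam ha (hf'm.abs.mul hgm)
      have step3 : (∫⁻ y in Iab a b, ENNReal.ofReal (|f' y| * g y) *
            ENNReal.ofReal (y ^ (-lam) - binv lam b))
          ≤ (∫⁻ y in Iab a b, ENNReal.ofReal |f' y| ^ p) ^ (1/p) *
            (∫⁻ y in Iab a b,
              (ENNReal.ofReal (g y) * ENNReal.ofReal (y ^ (-lam) - binv lam b)) ^ p') ^ (1/p') := by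
        have hmul := ENNReal.lintegral_mul_le_Lp_mul_Lq (volume.restrict (Iab a b)) hpq
          (f := fun y => ENNReal.ofReal |f' y|)
          (g := fun y => ENNReal.ofReal (g y) * ENNReal.ofReal (y ^ (-lam) - binv lam b))
          hf'm.abs.ennreal_ofReal.aemeasurable
          ((hgm.ennreal_ofReal.mul hwm.ennreal_ofReal).aemeasurable)
        refine le_trans (le_of_eq ?_) hmul
        apply lintegral_congr
        intro y
        simp only [Pi.mul_apply]
        rw [ENNReal.ofReal_mul (abs_nonneg _), mul_assoc]
      have step4 : (∫⁻ y in Iab a b, ENNReal.ofReal |f' y| ^ p) ^ (1/p)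
          = eLpNorm f (ENNReal.ofReal p) (volume.restrict (Iab a b)) := by
        rw [heLp f]
        congr 1
        apply lintegral_congr_ae
        filter_upwards [hff'] with y hy
        rw [hy, ← enorm_eq_nnnorm, Real.enorm_eq_ofReal_abs]
      refine step1.trans ?_
      rw [step2]
      refine step3.trans (le_of_eq ?_)
      rw [step4, mul_comm]
    exact (ENNReal.div_le_iff hfne hfmem.2.ne).mpr key
  · -- lower bound
    have hsn : ∀ n : ℕ, (0:ℝ) < a + 1/((n:ℝ)+1) :=
      fun n => add_pos_of_nonneg_of_pos ha (by positivity)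
    have hunm : ∀ n, Measurable (trf g lam a b n) := fun n => trf_measurable hgm lam a b n
    have hfnm : ∀ n, Measurable fun y => trf g lam a b n y ^ (p' - 1) := fun n =>
      (Real.continuous_rpow_const hp'm1.le).measurable.comp (hunm n)
    -- finiteness of the truncated integrals
    have hfin : ∀ n, (∫⁻ y in Iab a b, ENNReal.ofReal (trf g lam a b n y) ^ p') < ⊤ := by
      intro n
      have hb : ∀ y, ENNReal.ofReal (trf g lam a b n y) ^ p'
          ≤ (Ioo (a + 1/((n:ℝ)+1)) ((n:ℝ)+1)).indicator
              (fun _ => ENNReal.ofReal (n:ℝ) ^ p') y := by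
        intro y
        by_cases hy : y ∈ Iab a b ∩ Ioo (a + 1/((n:ℝ)+1)) ((n:ℝ)+1)
        · rw [indicator_of_mem hy.2]
          exact ENNReal.rpow_le_rpow
            (ENNReal.ofReal_le_ofReal (trf_le_n g lam a b n y)) hp'0.le
        · have h0 : trf g lam a b n y = 0 := by
            unfold trf; rw [indicator_of_notMem hy]
          rw [h0]
          simp [ENNReal.zero_rpow_of_pos hp'0]
      refine lt_of_le_of_lt (lintegral_mono hb) ?_
      rw [lintegral_indicator measurableSet_Ioo, setLIntegral_const]
      refine ENNReal.mul_lt_top (ENNReal.rpow_lt_top_of_nonneg hp'0.le ENNReal.ofReal_ne_top) ?_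
      rw [Measure.restrict_apply measurableSet_Ioo]
      refine lt_of_le_of_lt (measure_mono inter_subset_left) ?_
      rw [Real.volume_Ioo]
      exact ENNReal.ofReal_lt_top
    -- eLpNorm of the test functions
    have heq : ∀ n, eLpNorm (fun y => trf g lam a b n y ^ (p' - 1)) (ENNReal.ofReal p)
        (volume.restrict (Iab a b))
        = (∫⁻ y in Iab a b, ENNReal.ofReal (trf g lam a b n y) ^ p') ^ (1/p) := by
      intro n
      rw [heLp]
      congr 1
      apply lintegral_congr
      intro y
      rw [← enorm_eq_nnnorm, Real.enorm_eq_ofReal_abs,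
        abs_of_nonneg (Real.rpow_nonneg (trf_nonneg g lam a b n y) _),
        ← ENNReal.ofReal_rpow_of_nonneg (trf_nonneg g lam a b n y) hp'm1.le,
        ← ENNReal.rpow_mul, hp'p]
    have hmem : ∀ n, MemLp (fun y => trf g lam a b n y ^ (p' - 1)) (ENNReal.ofReal p)
        (volume.restrict (Iab a b)) := by
      intro n
      refine ⟨(hfnm n).aestronglyMeasurable, ?_⟩
      rw [heq n]
      exact ENNReal.rpow_lt_top_of_nonneg (by positivity) (hfin n).ne
    -- lower estimate on the L¹ norm of Lab applied to the test functions
    have hL1 : ∀ n, (∫⁻ y in Iab a b, ENNReal.ofReal (trf g lam a b n y) ^ p')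
        ≤ eLpNorm (Lab lam v a b (fun y => trf g lam a b n y ^ (p' - 1))) 1
            (volume.restrict (Ioi 0)) := by
      intro n
      rw [eLpNorm_one_eq_lintegral_enorm]
      -- integrability ingredients
      have hIcc : Icc (a + 1/((n:ℝ)+1)) ((n:ℝ)+1) ⊆ Ioi (0:ℝ) :=
        fun y hy => lt_of_lt_of_le (hsn n) hy.1
      have hvInt : IntegrableOn v (Icc (a + 1/((n:ℝ)+1)) ((n:ℝ)+1)) volume :=
        hvloc.integrableOn_compact_subset hIcc isCompact_Icc
      have hgInt : IntegrableOn g (Iab a b ∩ Ioo (a + 1/((n:ℝ)+1)) ((n:ℝ)+1)) volume := by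
        refine IntegrableOn.mono_set ?_
          (inter_subset_right.trans Ioo_subset_Icc_self)
        exact hvInt.congr (ae_mono (Measure.restrict_mono hIcc le_rfl) hvg)
      have hMaj : Integrable ((Iab a b ∩ Ioo (a + 1/((n:ℝ)+1)) ((n:ℝ)+1)).indicator
          (fun y => (n:ℝ) ^ (p' - 1) * |g y|)) (volume.restrict (Iab a b)) := by
        refine Integrable.integrableOn ?_
        refine IntegrableOn.integrable_indicator ?_
          (hImeas.inter measurableSet_Ioo)
        exact (hgInt.norm.const_mul _)
      have hLx : ∀ x ∈ Ioi (0:ℝ),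
          (‖Lab lam v a b (fun y => trf g lam a b n y ^ (p' - 1)) x‖₊ : ℝ≥0∞)
            = ∫⁻ y in Iab a b, ENNReal.ofReal (trf g lam a b n y ^ (p' - 1) * g y) *
                ENNReal.ofReal (Real.exp (-(x * y ^ lam)) - bexp lam b x) := by
        intro x hx
        have hint : Integrable (fun y => trf g lam a b n y ^ (p' - 1) * g y *
            (Real.exp (-(x * y ^ lam)) - bexp lam b x)) (volume.restrict (Iab a b)) := by
          refine Integrable.mono' hMaj ?_ ?_
          · refine (((hfnm n).mul hgm).mul ?_).aestronglyMeasurable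
            exact (by fun_prop : Measurable fun y : ℝ => Real.exp (-(x * y ^ lam))).sub
              measurable_const
          · refine Filter.Eventually.of_forall fun y => ?_
            by_cases hy : y ∈ Iab a b ∩ Ioo (a + 1/((n:ℝ)+1)) ((n:ℝ)+1)
            · rw [indicator_of_mem hy]
              have hker0 : 0 ≤ Real.exp (-(x * y ^ lam)) - bexp lam b x :=
                kernel_nonneg hlam ha (le_of_lt hx) hy.1
              have hker1 : Real.exp (-(x * y ^ lam)) - bexp lam b x ≤ 1 :=
                kernel_le_one (le_of_lt hx) (lt_of_le_of_lt ha hy.1.1) hlam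
              have htr : trf g lam a b n y ^ (p' - 1) ≤ (n:ℝ) ^ (p' - 1) :=
                Real.rpow_le_rpow (trf_nonneg g lam a b n y)
                  (trf_le_n g lam a b n y) hp'm1.le
              have htr0 : 0 ≤ trf g lam a b n y ^ (p' - 1) :=
                Real.rpow_nonneg (trf_nonneg g lam a b n y) _
              calc ‖trf g lam a b n y ^ (p' - 1) * g y *
                    (Real.exp (-(x * y ^ lam)) - bexp lam b x)‖
                  = trf g lam a b n y ^ (p' - 1) * |g y| *
                    (Real.exp (-(x * y ^ lam)) - bexp lam b x) := by
                    rw [Real.norm_eq_abs, abs_mul, abs_mul, abs_of_nonneg htr0,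
                      abs_of_nonneg hker0]
                _ ≤ (n:ℝ) ^ (p' - 1) * |g y| * 1 := by
                    refine mul_le_mul (mul_le_mul_of_nonneg_right htr (abs_nonneg _))
                      hker1 hker0 (by positivity)
                _ = (n:ℝ) ^ (p' - 1) * |g y| := mul_one _
            · have h0 : trf g lam a b n y = 0 := by
                unfold trf; rw [indicator_of_notMem hy]
              rw [indicator_of_notMem hy, h0, Real.zero_rpow hp'm1.ne']
              simp
        have hnn : 0 ≤ᵐ[volume.restrict (Iab a b)] fun y =>
            trf g lam a b n y ^ (p' - 1) * g y *
              (Real.exp (-(x * y ^ lam)) - bexp lam b x) := by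
          filter_upwards [hg0I, ae_restrict_mem hImeas] with y hgy hyI
          exact mul_nonneg (mul_nonneg (Real.rpow_nonneg (trf_nonneg g lam a b n y) _)
            hgy.1) (kernel_nonneg hlam ha (le_of_lt hx) hyI)
        have hcong : Lab lam v a b (fun y => trf g lam a b n y ^ (p' - 1)) x
            = ∫ y in Iab a b, trf g lam a b n y ^ (p' - 1) * g y *
                (Real.exp (-(x * y ^ lam)) - bexp lam b x) := by
          simp only [Lab]
          apply integral_congr_ae
          filter_upwards [hvgI] with y hy
          rw [hy]
        rw [hcong, ← enorm_eq_nnnorm, Real.enorm_eq_ofReal (integral_nonneg_of_ae hnn),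
          ofReal_integral_eq_lintegral_ofReal hint hnn]
        apply lintegral_congr_ae
        filter_upwards [hg0I] with y hgy
        rw [ENNReal.ofReal_mul (mul_nonneg
          (Real.rpow_nonneg (trf_nonneg g lam a b n y) _) hgy.1)]
      rw [setLIntegral_congr_fun (f := fun x => ‖Lab lam v a b (fun y => trf g lam a b n y ^ (p' - 1)) x‖ₑ)
          measurableSet_Ioi hLx,
        master (b := b) (h := fun y => trf g lam a b n y ^ (p' - 1) * g y) hlam ha ((hfnm n).mul hgm)]
      refine lintegral_mono_ae ?_
      filter_upwards [hg0I, ae_restrict_mem hImeas] with y hgy hyI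
      have h1 : ENNReal.ofReal (trf g lam a b n y ^ (p' - 1) * g y)
          = ENNReal.ofReal (trf g lam a b n y) ^ (p' - 1) * ENNReal.ofReal (g y) := by
        rw [ENNReal.ofReal_mul (Real.rpow_nonneg (trf_nonneg g lam a b n y) _),
          ← ENNReal.ofReal_rpow_of_nonneg (trf_nonneg g lam a b n y) hp'm1.le]
      rw [h1, mul_assoc]
      have h2 : ENNReal.ofReal (trf g lam a b n y)
          ≤ ENNReal.ofReal (g y) * ENNReal.ofReal (y ^ (-lam) - binv lam b) :=
        trf_le hgy.1
      have h3 : ENNReal.ofReal (trf g lam a b n y) ^ p'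
          = ENNReal.ofReal (trf g lam a b n y) ^ (p' - 1) *
            ENNReal.ofReal (trf g lam a b n y) := by
        have h := ENNReal.rpow_add_of_nonneg (x := ENNReal.ofReal (trf g lam a b n y))
          (p' - 1) 1 hp'm1.le zero_le_one
        rw [sub_add_cancel, ENNReal.rpow_one] at h
        exact h
      rw [h3]
      exact mul_le_mul_right h2 _
    -- each truncated quantity bounds Knorm from below
    have hterm : ∀ n, (∫⁻ y in Iab a b, ENNReal.ofReal (trf g lam a b n y) ^ p') ^ (1/p')
        ≤ Knorm lam v p 1 a b := by
      intro n
      by_cases hS0 : (∫⁻ y in Iab a b, ENNReal.ofReal (trf g lam a b n y) ^ p') = 0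
      · rw [hS0, ENNReal.zero_rpow_of_pos (by positivity)]
        exact bot_le
      · have hne : eLpNorm (fun y => trf g lam a b n y ^ (p' - 1)) (ENNReal.ofReal p)
            (volume.restrict (Iab a b)) ≠ 0 := by
          rw [heq n, Ne, ENNReal.rpow_eq_zero_iff_of_pos (by positivity)]
          exact hS0
        have h1p' : 1/p' = 1 - 1/p := by
          have h := hpq.inv_add_inv_eq_one
          rw [one_div, one_div]
          linarith
        have hstep : (∫⁻ y in Iab a b, ENNReal.ofReal (trf g lam a b n y) ^ p') ^ (1/p')
            ≤ eLpNorm (Lab lam v a b (fun y => trf g lam a b n y ^ (p' - 1)))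
                (ENNReal.ofReal 1) (volume.restrict (Ioi 0)) /
              eLpNorm (fun y => trf g lam a b n y ^ (p' - 1)) (ENNReal.ofReal p)
                (volume.restrict (Iab a b)) := by
          rw [ENNReal.ofReal_one, heq n, h1p',
            ENNReal.rpow_sub _ _ hS0 (hfin n).ne, ENNReal.rpow_one]
          exact ENNReal.div_le_div (hL1 n) le_rfl
        refine hstep.trans ?_
        simp only [Knorm]
        exact le_iSup (fun (f : {f : ℝ → ℝ // MemLp f (ENNReal.ofReal p)
              (volume.restrict (Iab a b)) ∧ eLpNorm f (ENNReal.ofReal p)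
              (volume.restrict (Iab a b)) ≠ 0}) =>
            eLpNorm (Lab lam v a b f.1) (ENNReal.ofReal 1) (volume.restrict (Ioi 0)) /
              eLpNorm f.1 (ENNReal.ofReal p) (volume.restrict (Iab a b)))
          ⟨fun y => trf g lam a b n y ^ (p' - 1), hmem n, hne⟩
    -- monotone convergence
    have hmeas' : ∀ n, Measurable fun y => ENNReal.ofReal (trf g lam a b n y) ^ p' :=
      fun n => (ENNReal.continuous_rpow_const.measurable).comp (hunm n).ennreal_ofReal
    have hmono : Monotone fun n => fun y => ENNReal.ofReal (trf g lam a b n y) ^ p' := by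
      intro n m hnm y
      exact ENNReal.rpow_le_rpow
        (ENNReal.ofReal_le_ofReal (trf_mono g lam a b hnm y)) hp'0.le
    have hsup : (⨆ n, ∫⁻ y in Iab a b, ENNReal.ofReal (trf g lam a b n y) ^ p')
        = ∫⁻ y in Iab a b,
            (ENNReal.ofReal (g y) * ENNReal.ofReal (y ^ (-lam) - binv lam b)) ^ p' := by
      rw [← lintegral_iSup hmeas' hmono]
      apply lintegral_congr_ae
      filter_upwards [hg0I, ae_restrict_mem hImeas] with y hgy hyI
      apply le_antisymm
      · exact iSup_le fun n => ENNReal.rpow_le_rpow (trf_le hgy.1) hp'0.le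
      · obtain ⟨m, hm⟩ := trf_attains hlam ha hyI hgy.1
        refine le_trans (le_of_eq ?_)
          (le_iSup (fun n => ENNReal.ofReal (trf g lam a b n y) ^ p') m)
        rw [hm, ENNReal.ofReal_mul hgy.1]
    have hSle : ∀ n, (∫⁻ y in Iab a b, ENNReal.ofReal (trf g lam a b n y) ^ p')
        ≤ Knorm lam v p 1 a b ^ p' := by
      intro n
      have h := ENNReal.rpow_le_rpow (hterm n) hp'0.le
      rwa [← ENNReal.rpow_mul, one_div_mul_cancel hp'0.ne', ENNReal.rpow_one] at h
    calc (∫⁻ y in Iab a b,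
          (ENNReal.ofReal (g y) * ENNReal.ofReal (y ^ (-lam) - binv lam b)) ^ p') ^ (1/p')
        = (⨆ n, ∫⁻ y in Iab a b, ENNReal.ofReal (trf g lam a b n y) ^ p') ^ (1/p') := by
          rw [hsup]
      _ ≤ (Knorm lam v p 1 a b ^ p') ^ (1/p') :=
          ENNReal.rpow_le_rpow (iSup_le hSle) (by positivity)
      _ = Knorm lam v p 1 a b := by
          rw [← ENNReal.rpow_mul, mul_one_div, div_self hp'0.ne', ENNReal.rpow_one]

end
end

section
/- Let 1<p<∞, 0<q<∞, λ>0 and let v be a nonnegative locally integrable weight on (0,∞). Set p'=p/(p−1), Δ_k=[2^{k−1},2^k] and σ_k(1) = (1−2^{−λ})^{1/q}·2^{−kλ/q}·(∫_{Δ_k} v^{p'}(y)dy)^{1/p'}. Let k₁,k₂,k₃∈ℤ with k₁<k₃ and k₁≤k₂≤k₃, and let z₁∈Δ_{k₁}, z₀∈Δ_{k₂}, z₂∈Δ_{k₃} with z₁≤z₀≤z₂. Then [z₀^{−λ}−z₂^{−λ}]^{1/q}·(∫_{z₁}^{z₀} v^{p'}(y)dy)^{1/p'} ≤ C·max_{k₁≤k≤k₂}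 σ_k(1), where C = 2^{λ/q}(1−2^{−λ})^{−1/q}(1−2^{−p'λ/q})^{−1/p'}. -/
open MeasureTheory Set ENNReal Filter

noncomputable section

lemma dyad_cover {k₁ k₂ : ℤ} {z₁ z₀ : ℝ}
    (hz₁ : (2:ℝ) ^ (k₁ - 1) ≤ z₁) (hz₀ : z₀ ≤ (2:ℝ) ^ k₂) :
    Set.Ioo z₁ z₀ ⊆ ⋃ k ∈ Finset.Icc k₁ k₂, dyad k := by
  intro y hy
  have h2pos : (0:ℝ) < (2:ℝ) ^ (k₁ - 1 : ℤ) := zpow_pos two_pos _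
  have hy0 : 0 < y := lt_of_le_of_lt (le_of_lt h2pos) (lt_of_le_of_lt hz₁ hy.1)
  set x := Real.logb 2 y with hx
  have hyx : (2:ℝ) ^ x = y := Real.rpow_logb two_pos (by norm_num) hy0
  have hzpow : ∀ m : ℤ, (2:ℝ) ^ ((m:ℝ)) = (2:ℝ) ^ m := fun m => Real.rpow_intCast 2 m
  set k := ⌈x⌉ with hk
  have hk1 : k₁ ≤ k := by
    have : ((k₁ - 1 : ℤ) : ℝ) < x := by
      rw [← Real.rpow_lt_rpow_left_iff (one_lt_two (α := ℝ)), hyx, hzpow]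
      exact lt_of_le_of_lt hz₁ hy.1
    have := Int.lt_ceil.mpr this
    omega
  have hk2 : k ≤ k₂ := by
    refine Int.ceil_le.mpr ?_
    rw [← Real.rpow_le_rpow_left_iff (one_lt_two (α := ℝ)), hyx, hzpow]
    exact le_of_lt (lt_of_lt_of_le hy.2 hz₀)
  refine Set.mem_biUnion (Finset.mem_Icc.mpr ⟨hk1, hk2⟩) ?_
  constructor
  · rw [← hzpow]
    have h1 : ((k - 1 : ℤ) : ℝ) < x := by
      push_cast
      have := Int.ceil_lt_add_one x
      simp only [← hk] at this
      linarith
    rw [← hyx]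
    exact le_of_lt (Real.rpow_lt_rpow_of_exponent_lt one_lt_two h1)
  · rw [← hzpow, ← hyx]
    exact Real.rpow_le_rpow_of_exponent_le one_le_two (by exact_mod_cast Int.le_ceil x)

lemma geom_bound' {k₁ k₂ : ℤ} (h12 : k₁ ≤ k₂) {s₀ : ℝ} (h0 : 0 ≤ s₀) (h1 : s₀ < 1) :
    ∑ k ∈ Finset.Icc k₁ k₂, s₀ ^ (k₂ - k).toNat ≤ (1 - s₀)⁻¹ := by
  have hre : ∑ k ∈ Finset.Icc k₁ k₂, s₀ ^ (k₂ - k).toNat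
      = ∑ m ∈ Finset.range ((k₂ - k₁).toNat + 1), s₀ ^ m := by
    refine Finset.sum_nbij' (fun k => (k₂ - k).toNat) (fun m => k₂ - (m:ℤ)) ?_ ?_ ?_ ?_ ?_
    · intro a ha; simp only [Finset.mem_Icc, Finset.mem_range] at *; omega
    · intro a ha; simp only [Finset.mem_Icc, Finset.mem_range] at *; omega
    · intro a ha; simp only [Finset.mem_Icc] at ha; omega
    · intro a ha; simp only [Finset.mem_range] at ha; omega
    · intros; rfl
  rw [hre]
  calc ∑ m ∈ Finset.range ((k₂ - k₁).toNat + 1), s₀ ^ m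
      ≤ ∑' m : ℕ, s₀ ^ m :=
        Summable.sum_le_tsum _ (fun i _ => pow_nonneg h0 i) (summable_geometric_of_lt_one h0 h1)
    _ = (1 - s₀)⁻¹ := tsum_geometric_of_lt_one h0 h1


/-- Lemma 7: pointwise dyadic estimate with the explicit constant
`C = 2^{λ/q}(1-2^{-λ})^{-1/q}(1-2^{-p'λ/q})^{-1/p'}`. -/
theorem statement10
    (p q lam : ℝ) (hp : 1 < p) (hq : 0 < q) (hlam : 0 < lam)
    (v : ℝ → ℝ)
    (hv0 : ∀ y ∈ Ioi (0:ℝ), 0 ≤ v y)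
    (hvloc : LocallyIntegrableOn v (Ioi 0))
    (p' : ℝ) (hp' : p' = p / (p - 1))
    (σ : ℤ → ℝ≥0∞)
    (hσ : ∀ k : ℤ, σ k =
      ENNReal.ofReal ((1 - 2 ^ (-lam)) ^ (1/q) * 2 ^ (-((k:ℝ) * lam) / q)) *
        (∫⁻ y in dyad k, ENNReal.ofReal (v y) ^ p') ^ (1/p'))
    (k₁ k₂ k₃ : ℤ) (h13 : k₁ < k₃) (h12 : k₁ ≤ k₂) (h23 : k₂ ≤ k₃)
    (z₁ z₀ z₂ : ℝ) (hz₁ : z₁ ∈ dyad k₁) (hz₀ : z₀ ∈ dyad k₂) (hz₂ : z₂ ∈ dyad k₃)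
    (h10 : z₁ ≤ z₀) (h02 : z₀ ≤ z₂)
    (C : ℝ) (hC : C = 2 ^ (lam/q) * (1 - 2 ^ (-lam)) ^ (-(1/q)) *
      (1 - 2 ^ (-(p' * lam / q))) ^ (-(1/p'))) :
    ENNReal.ofReal (z₀ ^ (-lam) - z₂ ^ (-lam)) ^ (1/q) *
        (∫⁻ y in Ioo z₁ z₀, ENNReal.ofReal (v y) ^ p') ^ (1/p') ≤
      ENNReal.ofReal C * ⨆ k ∈ Icc k₁ k₂, σ k := by
  have hp0 : (0:ℝ) < p - 1 := by linarith
  have hp'1 : (1:ℝ) < p' := by rw [hp', lt_div_iff₀ hp0]; linarith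
  have hp'0 : (0:ℝ) < p' := by linarith
  have hip' : (0:ℝ) ≤ 1/p' := (one_div_pos.mpr hp'0).le
  have hiq : (0:ℝ) ≤ 1/q := (one_div_pos.mpr hq).le
  have h2l1 : (2:ℝ) ^ (-lam) < 1 :=
    Real.rpow_lt_one_of_one_lt_of_neg one_lt_two (by linarith)
  have h2l0 : (0:ℝ) < 2 ^ (-lam) := Real.rpow_pos_of_pos two_pos _
  have hA1 : (0:ℝ) < 1 - 2 ^ (-lam) := by linarith
  set A : ℝ := (1 - 2 ^ (-lam)) ^ (1/q) with hAdef
  have hApos : 0 < A := Real.rpow_pos_of_pos hA1 _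
  set s₀ : ℝ := (2:ℝ) ^ (-(p' * lam / q)) with hs₀def
  have hs₀0 : 0 < s₀ := Real.rpow_pos_of_pos two_pos _
  have hs₀1 : s₀ < 1 := by
    refine Real.rpow_lt_one_of_one_lt_of_neg one_lt_two ?_
    have : 0 < p' * lam / q := by positivity
    linarith
  have hs₀p : (0:ℝ) < 1 - s₀ := by linarith
  set M := ⨆ k ∈ Icc k₁ k₂, σ k with hMdef
  set cK : ℝ := p' * lam / q with hcKdef
  set I : ℤ → ℝ≥0∞ := fun k => ∫⁻ y in dyad k, ENNReal.ofReal (v y) ^ p' with hIdef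
  set c : ℤ → ℝ := fun k => A * 2 ^ (-((k:ℝ) * lam) / q) with hcdef
  have hcpos : ∀ k, 0 < c k := by
    intro k
    simp only [hcdef]
    exact mul_pos hApos (Real.rpow_pos_of_pos two_pos _)
  have hσ' : ∀ k : ℤ, σ k = ENNReal.ofReal (c k) * (I k) ^ (1/p') := by
    intro k; simp only [hcdef, hIdef]; exact hσ k
  -- per-k bound
  have key : ∀ k ∈ Finset.Icc k₁ k₂,
      I k ≤ M ^ p' * ENNReal.ofReal ((c k)⁻¹ ^ p') := by
    intro k hk
    have hσk : σ k ≤ M := by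
      rw [hMdef]
      exact le_biSup _ (by simpa [Set.mem_Icc] using Finset.mem_Icc.mp hk)
    have hc0 : ENNReal.ofReal (c k) ≠ 0 := ne_of_gt (ENNReal.ofReal_pos.mpr (hcpos k))
    have h1 : I k ^ (1/p') ≤ M * ENNReal.ofReal ((c k)⁻¹) := by
      calc I k ^ (1/p') = (ENNReal.ofReal (c k))⁻¹ * σ k := by
            rw [hσ' k, ← mul_assoc, ENNReal.inv_mul_cancel hc0 ENNReal.ofReal_ne_top, one_mul]
        _ ≤ (ENNReal.ofReal (c k))⁻¹ * M := by gcongr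
        _ = M * ENNReal.ofReal ((c k)⁻¹) := by
            rw [mul_comm, ENNReal.ofReal_inv_of_pos (hcpos k)]
    calc I k = (I k ^ (1/p')) ^ p' := by
          rw [← ENNReal.rpow_mul, one_div, inv_mul_cancel₀ (ne_of_gt hp'0), ENNReal.rpow_one]
      _ ≤ (M * ENNReal.ofReal ((c k)⁻¹)) ^ p' := ENNReal.rpow_le_rpow h1 hp'0.le
      _ = M ^ p' * ENNReal.ofReal ((c k)⁻¹ ^ p') := by
          rw [ENNReal.mul_rpow_of_nonneg _ _ hp'0.le,
            ENNReal.ofReal_rpow_of_pos (inv_pos.mpr (hcpos k))]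
  -- covering bound
  have hstep2 : (∫⁻ y in Ioo z₁ z₀, ENNReal.ofReal (v y) ^ p')
      ≤ ∑ k ∈ Finset.Icc k₁ k₂, I k := by
    have hIoosub : Ioo z₁ z₀ ⊆ ⋃ k : {k // k ∈ Finset.Icc k₁ k₂}, dyad ↑k := by
      refine (dyad_cover hz₁.1 hz₀.2).trans ?_
      intro y hy
      simp only [Set.mem_iUnion] at hy ⊢
      obtain ⟨k, hk, hky⟩ := hy
      exact ⟨⟨k, hk⟩, hky⟩
    calc (∫⁻ y in Ioo z₁ z₀, ENNReal.ofReal (v y) ^ p')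
        ≤ ∫⁻ y in ⋃ k : {k // k ∈ Finset.Icc k₁ k₂}, dyad ↑k,
            ENNReal.ofReal (v y) ^ p' := lintegral_mono_set hIoosub
      _ ≤ ∑' k : {k // k ∈ Finset.Icc k₁ k₂}, I ↑k := lintegral_iUnion_le _ _
      _ = ∑ k ∈ Finset.Icc k₁ k₂, I k := Finset.tsum_subtype _ _
  -- real geometric bound
  have hterm : ∀ k ∈ Finset.Icc k₁ k₂,
      (c k)⁻¹ ^ p' = A⁻¹ ^ p' * (2:ℝ) ^ ((k₂:ℝ) * cK) * s₀ ^ (k₂ - k).toNat := by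
    intro k hk
    have hkk2 : k ≤ k₂ := (Finset.mem_Icc.mp hk).2
    have hn : ((k₂ - k).toNat : ℝ) = (k₂:ℝ) - (k:ℝ) := by
      have h := Int.toNat_of_nonneg (by omega : (0:ℤ) ≤ k₂ - k)
      have h2 := congrArg (fun z : ℤ => (z:ℝ)) h
      push_cast at h2
      exact h2
    have hck : (c k)⁻¹ ^ p' = A⁻¹ ^ p' * (2:ℝ) ^ ((k:ℝ) * cK) := by
      simp only [hcdef]
      rw [mul_inv, Real.mul_rpow (inv_nonneg.mpr hApos.le)
        (inv_nonneg.mpr (Real.rpow_pos_of_pos two_pos _).le)]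
      congr 1
      rw [← Real.rpow_neg (by norm_num : (0:ℝ) ≤ 2),
        ← Real.rpow_mul (by norm_num : (0:ℝ) ≤ 2)]
      congr 1
      rw [hcKdef]
      field_simp
    have h2 : (2:ℝ) ^ ((k:ℝ) * cK) = (2:ℝ) ^ ((k₂:ℝ) * cK) * s₀ ^ (k₂ - k).toNat := by
      rw [hs₀def, ← Real.rpow_natCast ((2:ℝ) ^ (-cK)) ((k₂ - k).toNat),
        ← Real.rpow_mul (by norm_num : (0:ℝ) ≤ 2), hn, ← Real.rpow_add two_pos]
      congr 1
      ring
    rw [hck, h2]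
    ring
  have hgeom : ∑ k ∈ Finset.Icc k₁ k₂, (c k)⁻¹ ^ p'
      ≤ A⁻¹ ^ p' * (2:ℝ) ^ ((k₂:ℝ) * cK) * (1 - s₀)⁻¹ := by
    rw [Finset.sum_congr rfl hterm, ← Finset.mul_sum]
    exact mul_le_mul_of_nonneg_left (geom_bound' h12 hs₀0.le hs₀1)
      (mul_nonneg (Real.rpow_nonneg (inv_nonneg.mpr hApos.le) _)
        (Real.rpow_pos_of_pos two_pos _).le)
  set D : ℝ := A⁻¹ ^ p' * (2:ℝ) ^ ((k₂:ℝ) * cK) * (1 - s₀)⁻¹ with hDdef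
  have hDpos : 0 < D := by
    refine mul_pos (mul_pos ?_ ?_) ?_
    · exact Real.rpow_pos_of_pos (inv_pos.mpr hApos) _
    · exact Real.rpow_pos_of_pos two_pos _
    · exact inv_pos.mpr hs₀p
  -- second factor bound
  have hf2 : (∫⁻ y in Ioo z₁ z₀, ENNReal.ofReal (v y) ^ p') ^ (1/p')
      ≤ M * ENNReal.ofReal (D ^ (1/p')) := by
    calc (∫⁻ y in Ioo z₁ z₀, ENNReal.ofReal (v y) ^ p') ^ (1/p')
        ≤ (∑ k ∈ Finset.Icc k₁ k₂, I k) ^ (1/p') :=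
          ENNReal.rpow_le_rpow hstep2 hip'
      _ ≤ (M ^ p' * ENNReal.ofReal D) ^ (1/p') := by
          refine ENNReal.rpow_le_rpow ?_ hip'
          calc ∑ k ∈ Finset.Icc k₁ k₂, I k
              ≤ ∑ k ∈ Finset.Icc k₁ k₂, M ^ p' * ENNReal.ofReal ((c k)⁻¹ ^ p') :=
                Finset.sum_le_sum key
            _ = M ^ p' * ENNReal.ofReal (∑ k ∈ Finset.Icc k₁ k₂, (c k)⁻¹ ^ p') := by
                rw [ENNReal.ofReal_sum_of_nonneg
                  (fun k _ => Real.rpow_nonneg (inv_nonneg.mpr (hcpos k).le) _),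
                  ← Finset.mul_sum]
            _ ≤ M ^ p' * ENNReal.ofReal D := by
                exact mul_le_mul_right (ENNReal.ofReal_le_ofReal hgeom) _
      _ = M * ENNReal.ofReal (D ^ (1/p')) := by
          rw [ENNReal.mul_rpow_of_nonneg _ _ hip',
            ← ENNReal.rpow_mul, mul_one_div, div_self (ne_of_gt hp'0), ENNReal.rpow_one,
            ENNReal.ofReal_rpow_of_pos hDpos]
  -- first factor bound
  set B : ℝ := (2:ℝ) ^ ((1 - (k₂:ℝ)) * lam / q) with hBdef
  have hBpos : 0 < B := Real.rpow_pos_of_pos two_pos _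
  have hz₀pos : (0:ℝ) < z₀ := lt_of_lt_of_le (zpow_pos two_pos _) hz₀.1
  have hf1 : ENNReal.ofReal (z₀ ^ (-lam) - z₂ ^ (-lam)) ^ (1/q) ≤ ENNReal.ofReal B := by
    have hz₂0 : (0:ℝ) ≤ z₂ := by linarith
    have hf1r : z₀ ^ (-lam) - z₂ ^ (-lam) ≤ ((2:ℝ) ^ (k₂ - 1 : ℤ)) ^ (-lam) := by
      have h1 : z₀ ^ (-lam) ≤ ((2:ℝ) ^ (k₂ - 1 : ℤ)) ^ (-lam) :=
        Real.rpow_le_rpow_of_nonpos (zpow_pos two_pos _) hz₀.1 (by linarith)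
      have h2 : (0:ℝ) ≤ z₂ ^ (-lam) := Real.rpow_nonneg hz₂0 _
      linarith
    calc ENNReal.ofReal (z₀ ^ (-lam) - z₂ ^ (-lam)) ^ (1/q)
        ≤ (ENNReal.ofReal (((2:ℝ) ^ (k₂ - 1 : ℤ)) ^ (-lam))) ^ (1/q) :=
          ENNReal.rpow_le_rpow (ENNReal.ofReal_le_ofReal hf1r) hiq
      _ = ENNReal.ofReal ((((2:ℝ) ^ (k₂ - 1 : ℤ)) ^ (-lam)) ^ (1/q)) :=
          ENNReal.ofReal_rpow_of_pos (Real.rpow_pos_of_pos (zpow_pos two_pos _) _)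
      _ = ENNReal.ofReal B := by
          rw [hBdef, ← Real.rpow_intCast 2 (k₂ - 1),
            ← Real.rpow_mul (by norm_num : (0:ℝ) ≤ 2),
            ← Real.rpow_mul (by norm_num : (0:ℝ) ≤ 2)]
          congr 1
          push_cast
          ring
  -- constant identity
  have hconst : B * D ^ (1/p') = C := by
    have e1 : (A⁻¹ ^ p') ^ (1/p') = A⁻¹ := by
      rw [← Real.rpow_mul (inv_nonneg.mpr hApos.le), mul_one_div,
        div_self (ne_of_gt hp'0), Real.rpow_one]
    have e2 : ((2:ℝ) ^ ((k₂:ℝ) * cK)) ^ (1/p') = (2:ℝ) ^ ((k₂:ℝ) * lam / q) := by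
      rw [← Real.rpow_mul (by norm_num : (0:ℝ) ≤ 2)]
      congr 1
      rw [hcKdef]
      field_simp
    have e3 : ((1 - s₀)⁻¹) ^ (1/p') = (1 - s₀) ^ (-(1/p')) := by
      rw [Real.inv_rpow hs₀p.le, ← Real.rpow_neg hs₀p.le]
    have e4 : A⁻¹ = (1 - 2 ^ (-lam)) ^ (-(1/q)) := by
      rw [hAdef]
      exact (Real.rpow_neg hA1.le _).symm
    have e5 : B * (2:ℝ) ^ ((k₂:ℝ) * lam / q) = (2:ℝ) ^ (lam / q) := by
      rw [hBdef, ← Real.rpow_add two_pos]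
      congr 1
      field_simp
      ring
    rw [hDdef, Real.mul_rpow
        (mul_nonneg (Real.rpow_nonneg (inv_nonneg.mpr hApos.le) _)
          (Real.rpow_pos_of_pos two_pos _).le) (inv_nonneg.mpr hs₀p.le),
      Real.mul_rpow (Real.rpow_nonneg (inv_nonneg.mpr hApos.le) _)
        (Real.rpow_pos_of_pos two_pos _).le,
      e1, e2, e3, e4, hC]
    calc B * ((1 - 2 ^ (-lam)) ^ (-(1/q)) * 2 ^ ((k₂:ℝ) * lam / q) * (1 - s₀) ^ (-(1/p')))
        = (B * 2 ^ ((k₂:ℝ) * lam / q)) *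
            ((1 - 2 ^ (-lam)) ^ (-(1/q)) * (1 - s₀) ^ (-(1/p'))) := by ring
      _ = 2 ^ (lam/q) * (1 - 2 ^ (-lam)) ^ (-(1/q)) * (1 - s₀) ^ (-(1/p')) := by
          rw [e5]; ring
  -- final assembly
  calc ENNReal.ofReal (z₀ ^ (-lam) - z₂ ^ (-lam)) ^ (1/q) *
        (∫⁻ y in Ioo z₁ z₀, ENNReal.ofReal (v y) ^ p') ^ (1/p')
      ≤ ENNReal.ofReal B * (M * ENNReal.ofReal (D ^ (1/p'))) := mul_le_mul' hf1 hf2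
    _ = ENNReal.ofReal (B * D ^ (1/p')) * M := by
        rw [ENNReal.ofReal_mul hBpos.le]; ring
    _ = ENNReal.ofReal C * M := by rw [hconst]

end
end

section
/- Let 1<p<∞, 0<q<∞, λ>0 and let v be a nonnegative locally integrable weight on (0,∞). Set p'=p/(p−1), θ=p'q/(p'+q), Δ_k=[2^{k−1},2^k] and σ_k(1) = (1−2^{−λ})^{1/q}·2^{−kλ/q}·(∫_{Δ_k} v^{p'}(y)dy)^{1/p'}. Let k∈ℤ, let 2^{k−1}<c₁<…<c_{l+1}<2^k, set I_n=(c_n,c_{n+1}) and take z_n∈I_n for n=1,…,l. Then there is a constant C>0 depending only on p, q, λ such that Σ_{n=1}^l [z_n^{−λ}−c_{n+1}^{−λ}]^{θ/q}·(∫_{c_n}^{z_n} v^{p'}(y)dy)^{θ/p'} ≤ C·σ_k(1)^θ. -/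
open MeasureTheory Set ENNReal Filter

noncomputable section

lemma holder_sum {P Q : ℝ} (hpq : P.HolderConjugate Q) (s : Finset ℕ) (a b : ℕ → ℝ≥0∞) :
    ∑ n ∈ s, (a n) ^ (1/P) * (b n) ^ (1/Q) ≤
      (∑ n ∈ s, a n) ^ (1/P) * (∑ n ∈ s, b n) ^ (1/Q) := by
  have h := ENNReal.lintegral_mul_le_Lp_mul_Lq (Measure.count : Measure s) hpq
      (f := fun n : s => (a n) ^ (1/P)) (g := fun n : s => (b n) ^ (1/Q))
      (measurable_of_countable _).aemeasurable (measurable_of_countable _).aemeasurable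
  have e1 : ∀ n : ℕ, ((a n) ^ (1/P)) ^ P = a n := fun n => by
    rw [← ENNReal.rpow_mul, one_div, inv_mul_cancel₀ hpq.ne_zero, ENNReal.rpow_one]
  have e2 : ∀ n : ℕ, ((b n) ^ (1/Q)) ^ Q = b n := fun n => by
    rw [← ENNReal.rpow_mul, one_div, inv_mul_cancel₀ hpq.symm.ne_zero, ENNReal.rpow_one]
  simp only [lintegral_count, Pi.mul_apply, e1, e2] at h
  rw [Finset.tsum_subtype s (fun n => (a n) ^ (1/P) * (b n) ^ (1/Q)),
    Finset.tsum_subtype s a, Finset.tsum_subtype s b] at h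
  exact h

lemma tele (f : ℕ → ℝ) (l : ℕ) :
    ∑ n ∈ Finset.Icc 1 l, (f n - f (n+1)) = f 1 - f (l+1) := by
  rw [show Finset.Icc 1 l = Finset.Ico 1 (l+1) by rw [Finset.Ico_add_one_right_eq_Icc],
    Finset.sum_Ico_eq_sum_range]
  simp only [Nat.add_sub_cancel]
  have := Finset.sum_range_sub' (fun i => f (1+i)) l
  simpa [add_comm, add_assoc, add_left_comm] using this


/-- Lemma 8: summation estimate inside one dyadic interval, `Σ_n […]^{θ/q}[…]^{θ/p'} ≲ σ_k(1)^θ`. -/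
theorem statement11
    (p q lam : ℝ) (hp : 1 < p) (hq : 0 < q) (hlam : 0 < lam)
    (p' θ : ℝ) (hp' : p' = p / (p - 1)) (hθ : θ = p' * q / (p' + q)) :
    ∃ C : ℝ, 0 < C ∧
      ∀ (v : ℝ → ℝ), (∀ y ∈ Ioi (0:ℝ), 0 ≤ v y) → LocallyIntegrableOn v (Ioi 0) →
      ∀ (k : ℤ) (l : ℕ) (c z : ℕ → ℝ),
        (∀ n, 1 ≤ n → n ≤ l → c n < c (n + 1)) →
        (2:ℝ) ^ (k - 1) < c 1 → c (l + 1) < (2:ℝ) ^ k →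
        (∀ n, 1 ≤ n → n ≤ l → z n ∈ Ioo (c n) (c (n + 1))) →
        ∑ n ∈ Finset.Icc 1 l,
          ENNReal.ofReal ((z n) ^ (-lam) - (c (n + 1)) ^ (-lam)) ^ (θ/q) *
            (∫⁻ y in Ioo (c n) (z n), ENNReal.ofReal (v y) ^ p') ^ (θ/p') ≤
        ENNReal.ofReal C *
          (ENNReal.ofReal ((1 - 2 ^ (-lam)) ^ (1/q) * 2 ^ (-((k:ℝ) * lam) / q)) *
            (∫⁻ y in dyad k, ENNReal.ofReal (v y) ^ p') ^ (1/p')) ^ θ := by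
  have hp1 : 0 < p - 1 := by linarith
  have hp'pos : 0 < p' := by rw [hp']; positivity
  have hθpos : 0 < θ := by rw [hθ]; positivity
  have hθq : 0 < θ/q := by positivity
  have hθp' : 0 < θ/p' := by positivity
  have hsum1 : θ/q + θ/p' = 1 := by
    rw [hθ]; field_simp
  have ha1 : (2:ℝ) ^ (-lam) < 1 :=
    Real.rpow_lt_one_of_one_lt_of_neg one_lt_two (by linarith)
  have ha0 : (0:ℝ) < 1 - 2 ^ (-lam) := by linarith
  have hconj : (q/θ).HolderConjugate (p'/θ) := by
    rw [Real.holderConjugate_iff]; constructor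
    · rw [lt_div_iff₀ hθpos, one_mul, hθ, div_lt_iff₀ (by positivity)]
      nlinarith
    · rw [inv_div, inv_div]; exact hsum1
  set Creal : ℝ := (2:ℝ) ^ (lam * (θ/q)) * ((1 - (2:ℝ) ^ (-lam)) ^ (θ/q))⁻¹ with hC
  have hCpos : 0 < Creal := by positivity
  refine ⟨Creal, hCpos, ?_⟩
  intro v hv hvloc k l c z hc hc1 hcl hz
  have h2k1 : (0:ℝ) < (2:ℝ) ^ (k-1) := by positivity
  -- monotonicity of c on [1, l+1]
  have hmono : ∀ m n : ℕ, 1 ≤ m → m ≤ n → n ≤ l + 1 → c m ≤ c n := by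
    intro m n hm hmn hn
    induction n, hmn using Nat.le_induction with
    | base => exact le_rfl
    | succ n hmn ih =>
        have h1 : c m ≤ c n := ih (by omega)
        exact h1.trans (hc n (by omega) (by omega)).le
  have hcpos : ∀ n : ℕ, 1 ≤ n → n ≤ l + 1 → 0 < c n := fun n h1 h2 =>
    h2k1.trans (hc1.trans_le (hmono 1 n le_rfl h1 h2))
  set A : ℕ → ℝ≥0∞ := fun n => ENNReal.ofReal ((z n) ^ (-lam) - (c (n + 1)) ^ (-lam)) with hA
  set B : ℕ → ℝ≥0∞ := fun n => ∫⁻ y in Ioo (c n) (z n), ENNReal.ofReal (v y) ^ p' with hB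
  set I : ℝ≥0∞ := ∫⁻ y in dyad k, ENNReal.ofReal (v y) ^ p' with hI
  set M : ℝ := ((2:ℝ) ^ (k-1)) ^ (-lam) with hM
  -- bound on ∑ A
  have hSA : ∑ n ∈ Finset.Icc 1 l, A n ≤ ENNReal.ofReal M := by
    have step1 : ∑ n ∈ Finset.Icc 1 l, A n ≤
        ∑ n ∈ Finset.Icc 1 l, ENNReal.ofReal ((c n) ^ (-lam) - (c (n+1)) ^ (-lam)) := by
      refine Finset.sum_le_sum fun n hn => ?_
      rw [Finset.mem_Icc] at hn
      refine ENNReal.ofReal_le_ofReal (sub_le_sub_right ?_ _)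
      exact Real.rpow_le_rpow_of_nonpos (hcpos n hn.1 (by omega))
        (hz n hn.1 hn.2).1.le (by linarith)
    have nonneg : ∀ n ∈ Finset.Icc 1 l,
        0 ≤ (c n) ^ (-lam) - (c (n+1)) ^ (-lam) := by
      intro n hn
      rw [Finset.mem_Icc] at hn
      have := Real.rpow_le_rpow_of_nonpos (hcpos n hn.1 (by omega))
        (hc n hn.1 hn.2).le (by linarith : -lam ≤ 0)
      linarith
    rw [← ENNReal.ofReal_sum_of_nonneg nonneg] at step1
    refine step1.trans (ENNReal.ofReal_le_ofReal ?_)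
    rw [tele (fun n => (c n) ^ (-lam)) l]
    have h1 : (0:ℝ) ≤ (c (l+1)) ^ (-lam) := Real.rpow_nonneg (hcpos (l+1) (by omega) le_rfl).le _
    have h2 : (c 1) ^ (-lam) ≤ M :=
      Real.rpow_le_rpow_of_nonpos h2k1 hc1.le (by linarith)
    linarith
  -- bound on ∑ B
  have hSB : ∑ n ∈ Finset.Icc 1 l, B n ≤ I := by
    have hdisj : (↑(Finset.Icc 1 l) : Set ℕ).PairwiseDisjoint
        (fun n => Ioo (c n) (z n)) := by
      have key : ∀ m n : ℕ, m ∈ Finset.Icc 1 l → n ∈ Finset.Icc 1 l → m < n →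
          Disjoint (Ioo (c m) (z m)) (Ioo (c n) (z n)) := by
        intro m n hm hn hmn
        rw [Finset.mem_Icc] at hm hn
        have h1 : z m < c (m+1) := (hz m hm.1 hm.2).2
        have h2 : c (m+1) ≤ c n := hmono (m+1) n (by omega) (by omega) (by omega)
        refine Set.disjoint_left.mpr fun x hx1 hx2 => ?_
        exact absurd (hx1.2.trans_le (h1.le.trans h2)) (not_lt.mpr hx2.1.le)
      intro m hm n hn hmn
      rcases lt_or_gt_of_ne hmn with h | h
      · exact key m n hm hn h
      · exact (key n m hn hm h).symm
    have hsub : (⋃ n ∈ Finset.Icc 1 l, Ioo (c n) (z n)) ⊆ dyad k := by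
      refine Set.iUnion₂_subset fun n hn => ?_
      rw [Finset.mem_Icc] at hn
      intro x hx
      constructor
      · have : c 1 ≤ c n := hmono 1 n le_rfl hn.1 (by omega)
        linarith [hx.1, hc1]
      · have h1 : z n < c (n+1) := (hz n hn.1 hn.2).2
        have h2 : c (n+1) ≤ c (l+1) := hmono (n+1) (l+1) (by omega) (by omega) le_rfl
        linarith [hx.2, hcl]
    calc ∑ n ∈ Finset.Icc 1 l, B n
        = ∫⁻ y in ⋃ n ∈ Finset.Icc 1 l, Ioo (c n) (z n),
            ENNReal.ofReal (v y) ^ p' :=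
          (lintegral_biUnion_finset hdisj (fun n _ => measurableSet_Ioo) _).symm
      _ ≤ I := lintegral_mono_set hsub
  -- Hölder
  have hH : ∑ n ∈ Finset.Icc 1 l, A n ^ (θ/q) * B n ^ (θ/p') ≤
      (∑ n ∈ Finset.Icc 1 l, A n) ^ (θ/q) * (∑ n ∈ Finset.Icc 1 l, B n) ^ (θ/p') := by
    have e1 : θ/q = 1/(q/θ) := (one_div_div q θ).symm
    have e2 : θ/p' = 1/(p'/θ) := (one_div_div p' θ).symm
    rw [e1, e2]
    exact holder_sum hconj _ A B
  -- final
  refine le_trans hH ?_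
  have hmain : (∑ n ∈ Finset.Icc 1 l, A n) ^ (θ/q) * (∑ n ∈ Finset.Icc 1 l, B n) ^ (θ/p')
      ≤ (ENNReal.ofReal M) ^ (θ/q) * I ^ (θ/p') :=
    mul_le_mul' (ENNReal.rpow_le_rpow hSA hθq.le) (ENNReal.rpow_le_rpow hSB hθp'.le)
  refine hmain.trans ?_
  -- now pure computation
  set D : ℝ := (1 - (2:ℝ) ^ (-lam)) ^ (1/q) * (2:ℝ) ^ (-((k:ℝ) * lam) / q) with hD
  have hDpos : 0 < D := by positivity
  have hRHS : ENNReal.ofReal Creal *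
      (ENNReal.ofReal D * I ^ (1/p')) ^ θ
      = ENNReal.ofReal (Creal * D ^ θ) * I ^ (θ/p') := by
    rw [ENNReal.mul_rpow_of_nonneg _ _ hθpos.le, ← ENNReal.rpow_mul,
      show (1/p') * θ = θ/p' by ring, ENNReal.ofReal_rpow_of_nonneg hDpos.le hθpos.le,
      ← mul_assoc, ← ENNReal.ofReal_mul hCpos.le]
  rw [hRHS]
  refine mul_le_mul' ?_ le_rfl
  rw [ENNReal.ofReal_rpow_of_nonneg (Real.rpow_nonneg h2k1.le _) hθq.le]
  refine ENNReal.ofReal_le_ofReal (le_of_eq ?_)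
  -- real identity: M^(θ/q) = Creal * D^θ
  have h2 : (0:ℝ) ≤ 2 := by norm_num
  have eM : (((2:ℝ) ^ (k-1)) : ℝ) ^ (-lam) = (2:ℝ) ^ (((k:ℝ) - 1) * (-lam)) := by
    rw [← Real.rpow_intCast 2 (k-1), ← Real.rpow_mul h2]
    congr 1
    push_cast
    ring
  have eD : D ^ θ = (1 - (2:ℝ) ^ (-lam)) ^ (θ/q) * (2:ℝ) ^ ((-((k:ℝ) * lam) / q) * θ) := by
    rw [hD, Real.mul_rpow (Real.rpow_nonneg ha0.le _) (Real.rpow_nonneg h2 _),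
      ← Real.rpow_mul ha0.le, ← Real.rpow_mul h2, show (1/q) * θ = θ/q by ring]
  rw [eM, ← Real.rpow_mul h2, eD, hC]
  rw [show (2:ℝ) ^ (lam * (θ/q)) * ((1 - (2:ℝ)^(-lam)) ^ (θ/q))⁻¹ *
      ((1 - (2:ℝ)^(-lam)) ^ (θ/q) * (2:ℝ) ^ ((-((k:ℝ) * lam) / q) * θ)) =
      ((1 - (2:ℝ)^(-lam)) ^ (θ/q) * ((1 - (2:ℝ)^(-lam)) ^ (θ/q))⁻¹) *
      ((2:ℝ) ^ (lam * (θ/q)) * (2:ℝ) ^ ((-((k:ℝ) * lam) / q) * θ)) by ring,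
    mul_inv_cancel₀ (by positivity), one_mul, ← Real.rpow_add two_pos]
  ring_nf

end
end
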